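/- In a relational monoid, if R(u,x,y) holds, then R(v, r x, y) holds if and only if R(v, y, r u) holds. -/
import Mathlib


/-- Relational associativity. -/
def RelAssoc {X : Type*} (R : X → X → X → Prop) : Prop :=
  ∀ u x y z : X, (∃ v, R u x v ∧ R v y z) ↔ (∃ v, R u v z ∧ R v x y)

/-- Definedness: `D R x y` iff the composite of `x` and `y` exists. -/
def D {X : Type*} (R : X → X → X → Prop) (x y : X) : Prop := ∃ z, R z x y

/-- Relational left unit. -/
def IsLUnit {X : Type*} (R : X → X → X → Prop) (e : X) : Prop :=
  (∃ x, R x e x) ∧ ∀ x y, R y e x → y = x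

/-- Relational right unit. -/
def IsRUnit {X : Type*} (R : X → X → X → Prop) (e : X) : Prop :=
  (∃ x, R x x e) ∧ ∀ x y, R y x e → y = x

/-- Relational unit: a left or a right unit. -/
def IsUnit' {X : Type*} (R : X → X → X → Prop) (e : X) : Prop :=
  IsLUnit R e ∨ IsRUnit R e

/-- Relational monoid: relationally associative, and every element has a left
unit composable on the left and a right unit composable on the right. -/
def RelMonoid {X : Type*} (R : X → X → X → Prop) : Prop :=
  RelAssoc R ∧ ∀ x, (∃ e, IsLUnit R e ∧ D R e x) ∧ (∃ e, IsRUnit R e ∧ D R x e)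

/-- Coherence. -/
def Coherent {X : Type*} (R : X → X → X → Prop) : Prop :=
  ∀ v x y z, R v x y → D R y z → D R v z

/-- Weak functionality: `R` is a partial operation. -/
def WFun {X : Type*} (R : X → X → X → Prop) : Prop :=
  ∀ x x' y z, R x y z → R x' y z → x = x'

theorem stmt8 {X : Type*} (R : X → X → X → Prop) (hM : RelMonoid R)
    (l r : X → X)
    (hl : ∀ x, IsUnit' R (l x) ∧ R x (l x) x)
    (hr : ∀ x, IsUnit' R (r x) ∧ R x x (r x)) :
    ∀ u v x y : X, R u x y → (R v (r x) y ↔ R v y (r u)) := by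
  obtain ⟨hA, hU⟩ := hM
  have R2L : ∀ e, IsRUnit R e → IsLUnit R e := by
    intro e he
    obtain ⟨f, hf, z, hz⟩ := (hU e).1
    have hze : z = e := hf.2 e z hz
    rw [hze] at hz
    have hef : e = f := he.2 f e hz
    rw [hef]; exact hf
  have L2R : ∀ e, IsLUnit R e → IsRUnit R e := by
    intro e he
    obtain ⟨g, hg, z, hz⟩ := (hU e).2
    have hze : z = e := hg.2 e z hz
    rw [hze] at hz
    have heg : e = g := he.2 g e hz
    rw [heg]; exact hg
  have hboth : ∀ z, IsLUnit R (r z) ∧ IsRUnit R (r z) := by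
    intro z
    rcases (hr z).1 with h | h
    · exact ⟨h, L2R _ h⟩
    · exact ⟨R2L _ h, h⟩
  intro u v x y huxy
  obtain ⟨hxL, _⟩ := hboth x
  obtain ⟨_, huR⟩ := hboth u
  have key1 : R y y (r u) := by
    obtain ⟨w, hw1, hw2⟩ := (hA u x y (r u)).2 ⟨u, (hr u).2, huxy⟩
    have hwy : w = y := huR.2 y w hw2
    rwa [hwy] at hw2
  have key2 : R y (r x) y := by
    obtain ⟨w, hw1, hw2⟩ := (hA u x (r x) y).2 ⟨x, huxy, (hr x).2⟩
    have hwy : w = y := hxL.2 y w hw2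
    rwa [hwy] at hw2
  constructor
  · intro h
    have hvy : v = y := hxL.2 y v h
    subst hvy; exact key1
  · intro h
    have hvy : v = y := huR.2 y v h
    subst hvy; exact key2
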